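/- Let $R$ be a valuation ring (with value group $\mathbb{Z}$ or $\mathbb{R}$), let $B$ be a subring of $W(R)$ (the ring of Witt vectors, or more generally a $p$-adically separated ring with $p^m B' \cap B = p^m B$ for the ambient ring $B'$), and fix $\alpha > 0$ and an element $u \in B$. Suppose $(y_n)_{n \geq 1}$ is a sequence with $y_n = x_n / u^{\alpha(n-1)}$ where $x_n \in B$, such that $y_{n+1} \equiv y_n \pmod{p^n}$ for all $n$. Then each $y_n$ lies in $(B/p^n B)[p/u^{\alpha}]$, and hence the limit $y = \lim_n y_n$ lies in the ring $B[[p/u^{\alpha}]]$ of power series $\sum_{m \geq 0} b_m (p/u^{\alpha})^m$ with $b_m \in B$. -/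
import Mathlib


/-- Lemma 6.2: let `B ⊆ B'` with `u ∈ B` invertible in `B'` (inverse `v`),
`B'`(hence `B`) `p`-adically separated, and `p^m B' ∩ B = p^m B`.  If
`y n = x n / u^(α(n-1))` with `x n ∈ B` and `y (n+1) ≡ y n mod p^n`, then the
`y n` converge to an element of `B[[p/u^α]]`: there are coefficients `b m ∈ B`
with `y n ≡ ∑_{m < n} b m (p/u^α)^m mod p^n` for all `n`. -/
theorem stmt_6 {B' : Type*} [CommRing B'] (B : Subring B')
    (p : ℕ) (u : B) (v : B') (huv : (u : B') * v = 1) (α : ℕ) (hα : 0 < α)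
    (hsep : ∀ x : B', (∀ n : ℕ, ∃ z : B', x = (p : B') ^ n * z) → x = 0)
    (hcap : ∀ (m : ℕ) (x : B'), x ∈ B → (∃ z : B', x = (p : B') ^ m * z) →
      ∃ b : B, x = (p : B') ^ m * (b : B'))
    (x : ℕ → B) (y : ℕ → B')
    (hy : ∀ n, 1 ≤ n → (u : B') ^ (α * (n - 1)) * y n = (x n : B'))
    (hcong : ∀ n, 1 ≤ n → ∃ z : B', y (n + 1) - y n = (p : B') ^ n * z) :
    ∃ b : ℕ → B, ∀ n, 1 ≤ n → ∃ z : B',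
      y n - ∑ m ∈ Finset.range n, (b m : B') * (p : B') ^ m * v ^ (α * m) =
        (p : B') ^ n * z := by
  classical
  have huvk : ∀ k : ℕ, (u : B') ^ k * v ^ k = 1 := fun k => by
    rw [← mul_pow, huv, one_pow]
  -- key algebraic identity
  have hA : ∀ n, 1 ≤ n → (u : B') ^ (α * n) * (y (n + 1) - y n)
      = (x (n + 1) : B') - (u : B') ^ α * (x n : B') := by
    intro n hn
    have h1 := hy (n + 1) (by omega)
    rw [Nat.add_sub_cancel] at h1
    have h2 := hy n hn
    have h3 : (u : B') ^ (α * n) * y n = (u : B') ^ α * (x n : B') := by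
      have he : α * n = α + α * (n - 1) := by
        have : n - 1 + 1 = n := by omega
        nlinarith [this]
      rw [he, pow_add, mul_assoc, h2]
    rw [mul_sub, h1, h3]
  have hb : ∀ n : ℕ, 1 ≤ n → ∃ b : B,
      ((x (n + 1) : B') - (u : B') ^ α * (x n : B')) = (p : B') ^ n * (b : B') := by
    intro n hn
    apply hcap
    · exact sub_mem (x (n + 1)).2 (mul_mem (pow_mem u.2 α) (x n).2)
    · obtain ⟨z, hz⟩ := hcong n hn
      refine ⟨(u : B') ^ (α * n) * z, ?_⟩
      rw [← hA n hn, hz]; ring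
  set b : ℕ → B := fun n => if h : 1 ≤ n then (hb n h).choose else x 1 with hbdef
  refine ⟨b, ?_⟩
  have key : ∀ n, 1 ≤ n →
      y n = ∑ m ∈ Finset.range n, (b m : B') * (p : B') ^ m * v ^ (α * m) := by
    intro n hn
    induction n with
    | zero => omega
    | succ n ih =>
      rcases Nat.lt_or_ge n 1 with h1 | h1
      · have hn0 : n = 0 := by omega
        subst hn0
        have h := hy 1 le_rfl
        simp only [Nat.sub_self, Nat.mul_zero, pow_zero, one_mul] at h
        simp [b, h]
      · -- step case
        have hspec := (hb n h1).choose_spec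
        have hbn : (b n : B') = ((hb n h1).choose : B') := by
          simp [b, h1]
        have hstep : y (n + 1) = y n + (b n : B') * (p : B') ^ n * v ^ (α * n) := by
          have h4 : (u : B') ^ (α * n) * (y (n + 1) - y n)
              = (p : B') ^ n * (b n : B') := by
            rw [hA n h1, hbn]; exact hspec
          have h5 : y (n + 1) - y n
              = v ^ (α * n) * ((u : B') ^ (α * n) * (y (n + 1) - y n)) := by
            rw [← mul_assoc, mul_comm (v ^ (α * n)), huvk, one_mul]
          rw [h4] at h5
          have : y (n + 1) - y n = (b n : B') * (p : B') ^ n * v ^ (α * n) := by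
            rw [h5]; ring
          linear_combination this
        rw [Finset.sum_range_succ, ← ih h1, hstep]
  intro n hn
  exact ⟨0, by rw [key n hn]; ring⟩
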